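/- Let G = (U, V, E) be a bipartite (2ℓ, d, δ)-expander, let S_j ⊆ [m] denote the neighborhood of column j, fix a block B_b = {(b−1)ℓ+1,…,bℓ} of ℓ columns, and let D_b ∪ D'_b be the set of nonzero entries (i,j) with j ≥ (b−1)ℓ+1 that are 'secondary or tertiary' with respect to B_b. Then for every integer t ≥ 1: if t = 1 the set {(i,j) ∈ D_b ∪ D'_b : j ≤ (b−1)ℓ+t} is empty, and if t > 1 its cardinality is at most 3δdt. Moreover |D_b| ≤ δdℓ. -/

import Mathlib

/-- Column `j` (numbered from `0`) lies in block `B_b = {(b-1)ℓ, …, bℓ - 1}`. -/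
def InBlock (ℓ b j : ℕ) : Prop := (b - 1) * ℓ ≤ j ∧ j < b * ℓ

/-- Secondary entries of block `b`: nonzero entries `(i,j)` with `j ∈ B_b` that are not the
leftmost nonzero entry of row `i` within `B_b`. -/
def SecondaryEntries {n m : ℕ} (S : Fin n → Finset (Fin m)) (ℓ b : ℕ) :
    Set (Fin m × Fin n) :=
  {ij | ij.1 ∈ S ij.2 ∧ InBlock ℓ b (ij.2 : ℕ) ∧
    ∃ j' : Fin n, InBlock ℓ b (j' : ℕ) ∧ ij.1 ∈ S j' ∧ (j' : ℕ) < (ij.2 : ℕ)}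

/-- Tertiary entries of block `b`: nonzero entries `(i,j)` lying in a later block
`B_{b'}` with `b < b' ≤ ⌈k/ℓ⌉`, in a row containing a primary entry of `B_b`
(equivalently, a row meeting `B_b`). -/
def TertiaryEntries {n m : ℕ} (S : Fin n → Finset (Fin m)) (ℓ b k : ℕ) :
    Set (Fin m × Fin n) :=
  {ij | ij.1 ∈ S ij.2 ∧ b * ℓ ≤ (ij.2 : ℕ) ∧ (ij.2 : ℕ) < ((k + ℓ - 1) / ℓ) * ℓ ∧
    ∃ j₀ : Fin n, InBlock ℓ b (j₀ : ℕ) ∧ ij.1 ∈ S j₀}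

open Finset

section helpers
variable {n m : ℕ}

def badSet (S : Fin n → Finset (Fin m)) (T : Finset (Fin n)) : Finset (Fin m × Fin n) :=
  Finset.univ.filter
    (fun ij => ij.2 ∈ T ∧ ij.1 ∈ S ij.2 ∧ ∃ j' ∈ T, (j' : ℕ) < (ij.2 : ℕ) ∧ ij.1 ∈ S j')

lemma badSet_card (S : Fin n → Finset (Fin m)) (d : ℕ) (hdeg : ∀ j, (S j).card = d)
    (T : Finset (Fin n)) :
    (badSet S T).card + (T.biUnion S).card ≤ d * T.card := by
  classical
  set F := Finset.univ.filter (fun ij : Fin m × Fin n => ij.2 ∈ T ∧ ij.1 ∈ S ij.2) with hF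
  have hFcard : F.card = d * T.card := by
    have hEq : F = T.biUnion (fun j => (S j).image (fun i => (i, j))) := by
      ext ⟨i, j⟩
      simp only [hF, Finset.mem_filter, Finset.mem_univ, true_and, Finset.mem_biUnion,
        Finset.mem_image, Prod.mk.injEq]
      constructor
      · rintro ⟨h1, h2⟩; exact ⟨j, h1, i, h2, rfl, rfl⟩
      · rintro ⟨j', h1, i', h2, rfl, rfl⟩; exact ⟨h1, h2⟩
    rw [hEq, Finset.card_biUnion]
    · rw [Finset.sum_congr rfl (fun j _ => ?_), Finset.sum_const, smul_eq_mul, mul_comm]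
      rw [Finset.card_image_of_injective _ (fun a b h => (Prod.mk.injEq _ _ _ _).mp h |>.1),
        hdeg]
    · intro a _ b _ hab
      apply Finset.disjoint_left.mpr
      rintro ⟨i, j⟩ h1 h2
      simp only [Finset.mem_image, Prod.mk.injEq] at h1 h2
      obtain ⟨_, _, _, rfl⟩ := h1
      obtain ⟨_, _, _, rfl⟩ := h2
      exact hab rfl
  have hsplit : (badSet S T).card +
      (F.filter (fun ij => ¬ ∃ j' ∈ T, (j' : ℕ) < (ij.2 : ℕ) ∧ ij.1 ∈ S j')).card = F.card := by
    rw [← Finset.card_filter_add_card_filter_not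
      (p := fun ij : Fin m × Fin n => ∃ j' ∈ T, (j' : ℕ) < (ij.2 : ℕ) ∧ ij.1 ∈ S j') (s := F)]
    congr 1
    unfold badSet
    rw [hF, Finset.filter_filter]
    apply congrArg Finset.card
    apply Finset.filter_congr
    intro ij _
    constructor
    · rintro ⟨h1, h2, h3⟩; exact ⟨⟨h1, h2⟩, h3⟩
    · rintro ⟨⟨h1, h2⟩, h3⟩; exact ⟨h1, h2, h3⟩
  have hgood : (T.biUnion S).card ≤
      (F.filter (fun ij => ¬ ∃ j' ∈ T, (j' : ℕ) < (ij.2 : ℕ) ∧ ij.1 ∈ S j')).card := by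
    apply Finset.card_le_card_of_surjOn (fun ij : Fin m × Fin n => ij.1)
    intro i hi
    simp only [Finset.coe_biUnion, Set.mem_iUnion, Finset.mem_coe] at hi
    obtain ⟨j, hjT, hij⟩ := hi
    have hne : (T.filter (fun j => i ∈ S j)).Nonempty := ⟨j, Finset.mem_filter.mpr ⟨hjT, hij⟩⟩
    set j₀ := (T.filter (fun j => i ∈ S j)).min' hne with hj₀
    have hj₀mem := (T.filter (fun j => i ∈ S j)).min'_mem hne
    rw [← hj₀] at hj₀mem
    rw [Finset.mem_filter] at hj₀mem
    refine ⟨(i, j₀), ?_, rfl⟩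
    simp only [Finset.coe_filter, Set.mem_setOf_eq, hF, Finset.mem_filter, Finset.mem_univ,
      true_and]
    refine ⟨⟨hj₀mem.1, hj₀mem.2⟩, ?_⟩
    rintro ⟨j', hj'T, hlt, hij'⟩
    have : j₀ ≤ j' := Finset.min'_le _ _ (Finset.mem_filter.mpr ⟨hj'T, hij'⟩)
    rw [Fin.le_def] at this
    omega
  omega

lemma ncard_le_badSet {S : Fin n → Finset (Fin m)} {A : Set (Fin m × Fin n)}
    {T : Finset (Fin n)} (h : A ⊆ ↑(badSet S T)) : A.ncard ≤ (badSet S T).card := by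
  calc A.ncard ≤ (↑(badSet S T) : Set (Fin m × Fin n)).ncard :=
        Set.ncard_le_ncard h (Set.toFinite _)
    _ = (badSet S T).card := Set.ncard_coe_finset _

lemma badSet_bound (S : Fin n → Finset (Fin m)) (d ℓ : ℕ) (δ : ℝ) (hδ : 0 ≤ δ)
    (hdeg : ∀ j, (S j).card = d)
    (hexp : ∀ T : Finset (Fin n), T.card ≤ 2 * ℓ →
      ((1 - δ) * d * T.card : ℝ) ≤ ((T.biUnion S).card : ℝ))
    (T : Finset (Fin n)) (hT : T.card ≤ 2 * ℓ) :
    ((badSet S T).card : ℝ) ≤ δ * d * T.card := by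
  have h1 := badSet_card S d hdeg T
  have h2 := hexp T hT
  have h3 : ((badSet S T).card : ℝ) + ((T.biUnion S).card : ℝ) ≤ (d : ℝ) * T.card := by
    push_cast
    exact_mod_cast Nat.cast_le.mpr h1
  nlinarith [h2, h3]

lemma card_interval_le (a c : ℕ) (P : Fin n → Prop) [DecidablePred P]
    (hP : ∀ j, P j → a ≤ (j : ℕ) ∧ (j : ℕ) < a + c) :
    (Finset.univ.filter P).card ≤ c := by
  have := Finset.card_le_card_of_injOn (fun j : Fin n => (j : ℕ) - a)
    (s := Finset.univ.filter P) (t := Finset.range c) ?_ ?_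
  · simpa using this
  · intro j hj
    simp only [Finset.coe_filter, Finset.mem_coe, Finset.mem_filter, Finset.mem_univ, true_and,
      Set.mem_setOf_eq] at hj
    have := hP j hj
    simp only [Finset.mem_coe, Finset.mem_range]
    omega
  · intro j1 h1 j2 h2 he
    simp only [Finset.coe_filter, Set.mem_setOf_eq] at h1 h2
    have p1 := hP _ h1.2
    have p2 := hP _ h2.2
    simp only at he
    apply Fin.ext
    omega

end helpers

/-- Expansion bounds on secondary/tertiary entries: for a `(2ℓ,d,δ)`-expander,
the prefix `{(i,j) ∈ D_b ∪ D'_b : j ≤ (b-1)ℓ + t}` is empty for `t = 1` and has at most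
`3δdt` elements for `t > 1`; moreover `|D_b| ≤ δdℓ`. (Columns are numbered from `0`,
so the prefix condition `j + 1 ≤ (b-1)ℓ + t` matches the paper's `1`-based `j ≤ (b-1)ℓ+t`.) -/
theorem expander_secondary_tertiary_bounds
    (n m d ℓ k b : ℕ) (δ : ℝ) (hδ0 : 0 < δ) (hδ1 : δ < 1 / 2)
    (hℓ : 1 ≤ ℓ) (hk : 1 ≤ k) (hkn : k ≤ n)
    (hb1 : 1 ≤ b) (hb2 : b ≤ (k + ℓ - 1) / ℓ)
    (S : Fin n → Finset (Fin m))
    (hdeg : ∀ j, (S j).card = d)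
    (hexp : ∀ T : Finset (Fin n), T.card ≤ 2 * ℓ →
      ((1 - δ) * d * T.card : ℝ) ≤ ((T.biUnion S).card : ℝ)) :
    (∀ t : ℕ, 1 ≤ t →
      (Set.ncard {ij ∈ SecondaryEntries S ℓ b ∪ TertiaryEntries S ℓ b k |
          (ij.2 : ℕ) + 1 ≤ (b - 1) * ℓ + t} : ℝ) ≤
        if t = 1 then 0 else 3 * δ * d * t) ∧
    (Set.ncard (SecondaryEntries S ℓ b) : ℝ) ≤ δ * d * ℓ := by
  classical
  have hδd : (0 : ℝ) ≤ δ * d := by positivity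
  have hbl : (b - 1) * ℓ + ℓ = b * ℓ := by
    obtain ⟨b', rfl⟩ : ∃ b', b = b' + 1 := ⟨b - 1, by omega⟩
    simp [Nat.add_sub_cancel, add_mul]
  constructor
  · -- prefix bounds
    intro t ht
    by_cases ht1 : t = 1
    · subst ht1
      rw [if_pos rfl]
      have hempty : {ij ∈ SecondaryEntries S ℓ b ∪ TertiaryEntries S ℓ b k |
          (ij.2 : ℕ) + 1 ≤ (b - 1) * ℓ + 1} = ∅ := by
        ext ⟨i, j⟩
        simp only [Set.mem_setOf_eq, Set.mem_union, Set.mem_empty_iff_false, iff_false,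
          not_and]
        rintro (⟨h1, h2, j', hj1, hj2, hj3⟩ | ⟨h1, h2, h3, _⟩) hle
        · have hle' : (j : ℕ) + 1 ≤ (b - 1) * ℓ + 1 := hle
          have hj3' : (j' : ℕ) < (j : ℕ) := hj3
          have hj1' : (b - 1) * ℓ ≤ (j' : ℕ) := hj1.1
          omega
        · have hle' : (j : ℕ) + 1 ≤ (b - 1) * ℓ + 1 := hle
          have h2' : b * ℓ ≤ (j : ℕ) := h2
          omega
      rw [hempty]
      simp
    · rw [if_neg ht1]
      have ht2 : 2 ≤ t := by omega
      set A : Set (Fin m × Fin n) :=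
        {ij ∈ SecondaryEntries S ℓ b | (ij.2 : ℕ) + 1 ≤ (b - 1) * ℓ + t} with hA
      set B : Set (Fin m × Fin n) :=
        {ij ∈ TertiaryEntries S ℓ b k | (ij.2 : ℕ) + 1 ≤ (b - 1) * ℓ + t} with hB
      have hsplit : {ij ∈ SecondaryEntries S ℓ b ∪ TertiaryEntries S ℓ b k |
          (ij.2 : ℕ) + 1 ≤ (b - 1) * ℓ + t} ⊆ A ∪ B := by
        rintro ij ⟨h1 | h1, h2⟩
        · exact Or.inl ⟨h1, h2⟩
        · exact Or.inr ⟨h1, h2⟩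
      have hncard : (Set.ncard {ij ∈ SecondaryEntries S ℓ b ∪ TertiaryEntries S ℓ b k |
          (ij.2 : ℕ) + 1 ≤ (b - 1) * ℓ + t} : ℝ) ≤ (A.ncard : ℝ) + (B.ncard : ℝ) := by
        have h1 := Set.ncard_le_ncard hsplit (Set.toFinite _)
        have h2 := Set.ncard_union_le A B
        exact_mod_cast h1.trans h2
      -- bound A
      set T1 : Finset (Fin n) := Finset.univ.filter
        (fun j : Fin n => (b - 1) * ℓ ≤ (j : ℕ) ∧ (j : ℕ) < b * ℓ ∧
          (j : ℕ) < (b - 1) * ℓ + t) with hT1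
      have hAsub : A ⊆ ↑(badSet S T1) := by
        rintro ⟨i, j⟩ ⟨⟨h1, h2, j', hj1, hj2, hj3⟩, hpre⟩
        have hpre' : (j : ℕ) + 1 ≤ (b - 1) * ℓ + t := hpre
        simp only [badSet, Finset.coe_filter, Set.mem_setOf_eq, Finset.mem_filter,
          Finset.mem_univ, true_and, hT1]
        exact ⟨⟨h2.1, h2.2, by omega⟩, h1, j', ⟨hj1.1, hj1.2, by omega⟩, hj3, hj2⟩
      have hT1ℓ : T1.card ≤ ℓ := by
        apply card_interval_le ((b - 1) * ℓ) ℓ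
        intro j hj
        omega
      have hT1t : T1.card ≤ t := by
        apply card_interval_le ((b - 1) * ℓ) t
        intro j hj
        omega
      have hAbound : (A.ncard : ℝ) ≤ δ * d * t := by
        have h1 : (A.ncard : ℝ) ≤ ((badSet S T1).card : ℝ) :=
          Nat.cast_le.mpr (ncard_le_badSet hAsub)
        have h2 := badSet_bound S d ℓ δ hδ0.le hdeg hexp T1 (by omega)
        have h3 : (T1.card : ℝ) ≤ (t : ℝ) := Nat.cast_le.mpr hT1t
        nlinarith
      -- bound B
      set R := (t - 1) / ℓ with hR
      set T2 : ℕ → Finset (Fin n) := fun r => Finset.univ.filter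
        (fun j : Fin n => ((b - 1) * ℓ ≤ (j : ℕ) ∧ (j : ℕ) < b * ℓ) ∨
          (b * ℓ + r * ℓ ≤ (j : ℕ) ∧ (j : ℕ) < b * ℓ + r * ℓ + ℓ)) with hT2
      have hT2card : ∀ r, (T2 r).card ≤ 2 * ℓ := by
        intro r
        have : T2 r ⊆ (Finset.univ.filter
            (fun j : Fin n => (b - 1) * ℓ ≤ (j : ℕ) ∧ (j : ℕ) < b * ℓ)) ∪
            (Finset.univ.filter
            (fun j : Fin n => b * ℓ + r * ℓ ≤ (j : ℕ) ∧ (j : ℕ) < b * ℓ + r * ℓ + ℓ)) := by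
          intro j hj
          simp only [hT2, Finset.mem_filter, Finset.mem_univ, true_and] at hj
          simp only [Finset.mem_union, Finset.mem_filter, Finset.mem_univ, true_and]
          exact hj
        calc (T2 r).card ≤ _ := Finset.card_le_card this
          _ ≤ _ + _ := Finset.card_union_le _ _
          _ ≤ ℓ + ℓ := by
              gcongr
              · apply card_interval_le ((b - 1) * ℓ) ℓ; intro j hj; omega
              · apply card_interval_le (b * ℓ + r * ℓ) ℓ; intro j hj; omega
          _ = 2 * ℓ := by ring
      have hBsub : B ⊆ ↑((Finset.range R).biUnion (fun r => badSet S (T2 r))) := by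
        rintro ⟨i, j⟩ ⟨⟨h1, h2, h3, j₀, hj₀b, hij₀⟩, hpre⟩
        have hpre' : (j : ℕ) + 1 ≤ (b - 1) * ℓ + t := hpre
        have h2' : b * ℓ ≤ (j : ℕ) := h2
        simp only [Finset.coe_biUnion, Set.mem_iUnion, Finset.mem_coe, Finset.mem_range]
        obtain ⟨r, hr⟩ : ∃ r, r = ((j : ℕ) - b * ℓ) / ℓ := ⟨_, rfl⟩
        have f1 : r * ℓ ≤ (j : ℕ) - b * ℓ := by
          rw [hr]; exact Nat.div_mul_le_self _ _
        have f2 : (j : ℕ) - b * ℓ < r * ℓ + ℓ := by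
          rw [hr]
          have hdm := Nat.div_add_mod ((j : ℕ) - b * ℓ) ℓ
          have hml := Nat.mod_lt ((j : ℕ) - b * ℓ) (y := ℓ) (by omega)
          have hc : ((j : ℕ) - b * ℓ) / ℓ * ℓ = ℓ * (((j : ℕ) - b * ℓ) / ℓ) :=
            Nat.mul_comm _ _
          omega
        have f3 : (r + 1) * ℓ = r * ℓ + ℓ := by ring
        refine ⟨r, ?_, ?_⟩
        · rw [hR]
          have hkey : (r + 1) * ℓ ≤ t - 1 := by omega
          exact Nat.lt_of_lt_of_le (Nat.lt_succ_self r)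
            ((Nat.le_div_iff_mul_le (by omega)).mpr hkey)
        · simp only [badSet, hT2, Finset.mem_filter, Finset.mem_univ, true_and]
          refine ⟨Or.inr ⟨by omega, by omega⟩, h1, j₀, Or.inl ⟨hj₀b.1, hj₀b.2⟩, ?_, hij₀⟩
          have := hj₀b.2
          omega
      have hBbound : (B.ncard : ℝ) ≤ 2 * δ * d * t := by
        have h1 : B.ncard ≤ ((Finset.range R).biUnion (fun r => badSet S (T2 r))).card := by
          calc B.ncard ≤ _ := Set.ncard_le_ncard hBsub (Set.toFinite _)
            _ = _ := Set.ncard_coe_finset _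
        have h2 : ((Finset.range R).biUnion (fun r => badSet S (T2 r))).card ≤
            ∑ r ∈ Finset.range R, (badSet S (T2 r)).card := Finset.card_biUnion_le
        have h3 : (∑ r ∈ Finset.range R, ((badSet S (T2 r)).card : ℝ)) ≤
            ∑ r ∈ Finset.range R, δ * d * (2 * ℓ) := by
          apply Finset.sum_le_sum
          intro r _
          have hb1' := badSet_bound S d ℓ δ hδ0.le hdeg hexp (T2 r) (hT2card r)
          have hle2 : ((T2 r).card : ℝ) ≤ 2 * (ℓ : ℝ) := by
            exact_mod_cast Nat.cast_le.mpr (hT2card r)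
          nlinarith
        have h4 : (∑ r ∈ Finset.range R, δ * d * (2 * ℓ) : ℝ) = R * (δ * d * (2 * ℓ)) := by
          rw [Finset.sum_const, Finset.card_range, nsmul_eq_mul]
        have h5 : (R : ℝ) * ℓ ≤ t := by
          have h7 : R * ℓ ≤ t - 1 := Nat.div_mul_le_self _ _
          have h6 : R * ℓ ≤ t := by omega
          exact_mod_cast h6
        calc (B.ncard : ℝ) ≤ ((Finset.range R).biUnion (fun r => badSet S (T2 r))).card :=
              Nat.cast_le.mpr h1
          _ ≤ ∑ r ∈ Finset.range R, ((badSet S (T2 r)).card : ℝ) := by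
              exact_mod_cast Nat.cast_le.mpr h2
          _ ≤ R * (δ * d * (2 * ℓ)) := h3.trans_eq h4
          _ = 2 * δ * d * ((R : ℝ) * ℓ) := by ring
          _ ≤ 2 * δ * d * t := by nlinarith
      calc _ ≤ (A.ncard : ℝ) + (B.ncard : ℝ) := hncard
        _ ≤ δ * d * t + 2 * δ * d * t := add_le_add hAbound hBbound
        _ = 3 * δ * d * t := by ring
  · -- |D_b| ≤ δdℓ
    set T : Finset (Fin n) := Finset.univ.filter
      (fun j : Fin n => (b - 1) * ℓ ≤ (j : ℕ) ∧ (j : ℕ) < b * ℓ) with hT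
    have hsub : SecondaryEntries S ℓ b ⊆ ↑(badSet S T) := by
      rintro ⟨i, j⟩ ⟨h1, h2, j', hj1, hj2, hj3⟩
      simp only [badSet, Finset.coe_filter, Set.mem_setOf_eq, Finset.mem_filter,
        Finset.mem_univ, true_and, hT]
      exact ⟨⟨h2.1, h2.2⟩, h1, j', ⟨hj1.1, hj1.2⟩, hj3, hj2⟩
    have hTcard : T.card ≤ ℓ := by
      apply card_interval_le ((b - 1) * ℓ) ℓ
      intro j hj
      omega
    have h1 : ((SecondaryEntries S ℓ b).ncard : ℝ) ≤ ((badSet S T).card : ℝ) :=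
      Nat.cast_le.mpr (ncard_le_badSet hsub)
    have h2 := badSet_bound S d ℓ δ hδ0.le hdeg hexp T (by omega)
    have h3 : (T.card : ℝ) ≤ (ℓ : ℝ) := Nat.cast_le.mpr hTcard
    nlinarith
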